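/- For every integer n ≥ 2, the ℚ-vector space VG_n^{S_n} of S_n-invariant elements of VG_n has dimension n + 1. -/

import Mathlib

noncomputable section

/-- Index set for the variables `x_{ij}` with `i ≠ j` in `{1, …, n+1}` (as `Fin (n+1)`). -/
abbrev VGidx (n : ℕ) := {p : Fin (n+1) × Fin (n+1) // p.1 ≠ p.2}

/-- The defining ideal of the Varchenko–Gel'fand ring of the braid arrangement `A_n`. -/
def VGrel (n : ℕ) : Ideal (MvPolynomial (VGidx n) ℚ) :=
  Ideal.span
    ({q | ∃ v : VGidx n, q = MvPolynomial.X v ^ 2} ∪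
     {q | ∃ (i j : Fin (n+1)) (hij : i ≠ j),
        q = MvPolynomial.X (⟨(i,j),hij⟩ : VGidx n) + MvPolynomial.X ⟨(j,i),hij.symm⟩} ∪
     {q | ∃ (i j k : Fin (n+1)) (hij : i ≠ j) (hjk : j ≠ k) (hki : k ≠ i),
        q = MvPolynomial.X (⟨(i,j),hij⟩ : VGidx n) * MvPolynomial.X ⟨(j,k),hjk⟩
          + MvPolynomial.X (⟨(j,k),hjk⟩ : VGidx n) * MvPolynomial.X ⟨(k,i),hki⟩
          + MvPolynomial.X (⟨(k,i),hki⟩ : VGidx n) * MvPolynomial.X ⟨(i,j),hij⟩})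

/-- The Varchenko–Gel'fand ring `VG_n`. -/
abbrev VG (n : ℕ) := MvPolynomial (VGidx n) ℚ ⧸ VGrel n

/-- The action of a permutation of `{1, …, n+1}` on the variable indices. -/
def VGpermIdx (n : ℕ) (σ : Equiv.Perm (Fin (n+1))) : VGidx n → VGidx n :=
  fun v => ⟨(σ v.1.1, σ v.1.2), fun h => v.2 (σ.injective h)⟩

lemma VGrel_stable (n : ℕ) (σ : Equiv.Perm (Fin (n+1))) :
    ∀ a ∈ VGrel n, (MvPolynomial.rename (VGpermIdx n σ)) a ∈ VGrel n := by
  intro a ha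
  have hle : (VGrel n).map (MvPolynomial.rename (VGpermIdx n σ)).toRingHom ≤ VGrel n := by
    rw [VGrel, Ideal.map_span, Ideal.span_le]
    rintro q ⟨p, hp, rfl⟩
    apply Ideal.subset_span
    simp only [Set.mem_union, Set.mem_setOf_eq] at hp ⊢
    rcases hp with ((⟨v, rfl⟩ | ⟨i, j, hij, rfl⟩) | ⟨i, j, k, hij, hjk, hki, rfl⟩)
    · refine Or.inl (Or.inl ⟨VGpermIdx n σ v, ?_⟩)
      simp [map_pow, MvPolynomial.rename_X]
    · refine Or.inl (Or.inr ⟨σ i, σ j, fun h => hij (σ.injective h), ?_⟩)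
      simp [map_add, MvPolynomial.rename_X, VGpermIdx]
    · refine Or.inr ⟨σ i, σ j, σ k, fun h => hij (σ.injective h), fun h => hjk (σ.injective h),
        fun h => hki (σ.injective h), ?_⟩
      simp [map_add, map_mul, MvPolynomial.rename_X, VGpermIdx]
  exact hle (Ideal.mem_map_of_mem _ ha)

/-- The algebra automorphism of `VG_n` induced by a permutation of `{1, …, n+1}`. -/
def VGperm (n : ℕ) (σ : Equiv.Perm (Fin (n+1))) : VG n →ₐ[ℚ] VG n :=
  Ideal.Quotient.liftₐ (VGrel n)
    ((Ideal.Quotient.mkₐ ℚ (VGrel n)).comp (MvPolynomial.rename (VGpermIdx n σ)))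
    (fun a ha => by
      simp only [AlgHom.comp_apply, Ideal.Quotient.mkₐ_eq_mk]
      exact Ideal.Quotient.eq_zero_iff_mem.mpr (VGrel_stable n σ a ha))

/-- The subalgebra of `S_n`-invariants of `VG_n`, where `S_n` is the subgroup of permutations
of `{1, …, n+1}` fixing `n+1`. -/
def VGinv (n : ℕ) : Subalgebra ℚ (VG n) where
  carrier := {x | ∀ σ : Equiv.Perm (Fin (n+1)), σ (Fin.last n) = Fin.last n → VGperm n σ x = x}
  mul_mem' := fun hx hy σ hσ => by rw [map_mul, hx σ hσ, hy σ hσ]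
  add_mem' := fun hx hy σ hσ => by rw [map_add, hx σ hσ, hy σ hσ]
  one_mem' := fun σ _ => map_one _
  zero_mem' := fun σ _ => map_zero _
  algebraMap_mem' := fun r σ hσ => AlgHom.commutes _ r

/-- The subalgebra of `S_{n+1}`-invariants of `VG_n`. -/
def VGinvFull (n : ℕ) : Subalgebra ℚ (VG n) where
  carrier := {x | ∀ σ : Equiv.Perm (Fin (n+1)), VGperm n σ x = x}
  mul_mem' := fun hx hy σ => by rw [map_mul, hx σ, hy σ]
  add_mem' := fun hx hy σ => by rw [map_add, hx σ, hy σ]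
  one_mem' := fun σ => map_one _
  zero_mem' := fun σ => map_zero _
  algebraMap_mem' := fun r σ => AlgHom.commutes _ r

/-- The element `z = x_{1,n+1} + x_{2,n+1} + ⋯ + x_{n,n+1}` of `VG_n`. -/
def zVG (n : ℕ) : VG n :=
  Ideal.Quotient.mk (VGrel n)
    (∑ i : Fin n, MvPolynomial.X ⟨(i.castSucc, Fin.last n), (Fin.castSucc_lt_last i).ne⟩)


variable {ι : Type*} [DecidableEq ι]

lemma pair_sum {M : Type*} [AddCommMonoid M] (U : Finset ι) (k : ℕ) (g : ι → Finset ι → M) :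
    ∑ i ∈ U, ∑ S ∈ (U.erase i).powersetCard k, g i S
      = ∑ T ∈ U.powersetCard (k+1), ∑ b ∈ T, g b (T.erase b) := by
  rw [Finset.sum_sigma', Finset.sum_sigma']
  refine Finset.sum_bij' (fun p _ => ⟨insert p.1 p.2, p.1⟩) (fun q _ => ⟨q.2, q.1.erase q.2⟩)
    ?_ ?_ ?_ ?_ ?_
  · rintro ⟨i, S⟩ hp
    rw [Finset.mem_sigma] at hp ⊢
    obtain ⟨hi, hS⟩ := hp
    rw [Finset.mem_powersetCard] at hS
    obtain ⟨hSsub, hScard⟩ := hS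
    have hiS : i ∉ S := fun h => (Finset.mem_erase.mp (hSsub h)).1 rfl
    constructor
    · rw [Finset.mem_powersetCard]
      refine ⟨Finset.insert_subset hi (hSsub.trans (Finset.erase_subset _ _)), ?_⟩
      rw [Finset.card_insert_of_notMem hiS, hScard]
    · exact Finset.mem_insert_self _ _
  · rintro ⟨T, b⟩ hq
    rw [Finset.mem_sigma] at hq ⊢
    obtain ⟨hT, hb⟩ := hq
    rw [Finset.mem_powersetCard] at hT
    obtain ⟨hTsub, hTcard⟩ := hT
    refine ⟨hTsub hb, ?_⟩
    rw [Finset.mem_powersetCard]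
    constructor
    · intro x hx
      rw [Finset.mem_erase] at hx ⊢
      exact ⟨hx.1, hTsub hx.2⟩
    · rw [Finset.card_erase_of_mem hb, hTcard]; rfl
  · rintro ⟨i, S⟩ hp
    rw [Finset.mem_sigma] at hp
    have hiS : i ∉ S := fun h => (Finset.mem_erase.mp ((Finset.mem_powersetCard.mp hp.2).1 h)).1 rfl
    simp [Finset.erase_insert hiS]
  · rintro ⟨T, b⟩ hq
    rw [Finset.mem_sigma] at hq
    simp [Finset.insert_erase hq.2]
  · rintro ⟨i, S⟩ hp
    rw [Finset.mem_sigma] at hp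
    have hiS : i ∉ S := fun h => (Finset.mem_erase.mp ((Finset.mem_powersetCard.mp hp.2).1 h)).1 rfl
    simp [Finset.erase_insert hiS]

lemma sq_expand {A : Type*} [CommRing A] (s : Finset ι) (w : ι → A)
    (hw : ∀ j ∈ s, w j * w j = 0) (k : ℕ) :
    (∑ j ∈ s, w j) ^ k = k.factorial • ∑ S ∈ s.powersetCard k, ∏ j ∈ S, w j := by
  induction k with
  | zero => simp
  | succ k ih =>
    rw [pow_succ, ih, smul_mul_assoc, Finset.sum_mul]
    have step : ∀ S ∈ s.powersetCard k,
        (∏ j ∈ S, w j) * ∑ i ∈ s, w i = ∑ i ∈ s \ S, ∏ j ∈ insert i S, w j := by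
      intro S hS
      rw [Finset.mem_powersetCard] at hS
      rw [Finset.mul_sum, ← Finset.sum_sdiff hS.1]
      have h2 : ∑ i ∈ S, (∏ j ∈ S, w j) * w i = 0 := by
        apply Finset.sum_eq_zero
        intro i hi
        rw [← Finset.mul_prod_erase S w hi, mul_comm (w i), mul_assoc, hw i (hS.1 hi), mul_zero]
      rw [h2, add_zero]
      apply Finset.sum_congr rfl
      intro i hi
      rw [Finset.prod_insert (Finset.mem_sdiff.mp hi).2, mul_comm]
    rw [Finset.sum_congr rfl step]
    have swap : ∑ S ∈ s.powersetCard k, ∑ i ∈ s \ S, ∏ j ∈ insert i S, w j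
        = ∑ i ∈ s, ∑ S ∈ (s.erase i).powersetCard k, ∏ j ∈ insert i S, w j := by
      apply Finset.sum_comm'
      intro S i
      simp only [Finset.mem_powersetCard, Finset.mem_sdiff, Finset.subset_erase]
      tauto
    rw [swap, pair_sum s k (fun b S => ∏ j ∈ insert b S, w j)]
    have inner : ∀ T ∈ s.powersetCard (k+1),
        ∑ b ∈ T, ∏ j ∈ insert b (T.erase b), w j = (k+1) • ∏ j ∈ T, w j := by
      intro T hT
      rw [Finset.mem_powersetCard] at hT
      rw [Finset.sum_congr rfl (fun b hb => by rw [Finset.insert_erase hb]),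
        Finset.sum_const, hT.2]
    rw [Finset.sum_congr rfl inner, ← Finset.smul_sum, smul_smul, Nat.factorial_succ,
      Nat.mul_comm]

namespace VGaux

open MvPolynomial

set_option maxHeartbeats 1000000
set_option synthInstance.maxHeartbeats 400000

variable (n : ℕ)

/-- Total version of the generators of `VG n`. -/
def xbar (i j : Fin (n+1)) : VG n :=
  if h : i ≠ j then Ideal.Quotient.mk (VGrel n) (MvPolynomial.X ⟨(i,j),h⟩) else 0

lemma xbar_mk (v : VGidx n) :
    Ideal.Quotient.mk (VGrel n) (MvPolynomial.X v) = xbar n v.1.1 v.1.2 := by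
  rw [xbar, dif_pos v.2]

lemma xbar_self (i : Fin (n+1)) : xbar n i i = 0 := by
  rw [xbar, dif_neg (by simp)]

lemma xbar_sq (i j : Fin (n+1)) : xbar n i j * xbar n i j = 0 := by
  by_cases h : i ≠ j
  · rw [xbar, dif_pos h, ← map_mul, ← sq]
    rw [Ideal.Quotient.eq_zero_iff_mem]
    exact Ideal.subset_span (Or.inl (Or.inl ⟨⟨(i,j),h⟩, rfl⟩))
  · rw [xbar, dif_neg h, zero_mul]

lemma xbar_antisymm (i j : Fin (n+1)) : xbar n j i = - xbar n i j := by
  by_cases h : i ≠ j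
  · have : xbar n j i + xbar n i j = 0 := by
      rw [xbar, xbar, dif_pos (Ne.symm h), dif_pos h, ← map_add,
        Ideal.Quotient.eq_zero_iff_mem]
      exact Ideal.subset_span (Or.inl (Or.inr ⟨j, i, Ne.symm h, rfl⟩))
    linear_combination this
  · push_neg at h
    subst h
    rw [xbar_self, neg_zero]

lemma xbar_triangle (i j k : Fin (n+1)) (hij : i ≠ j) (hjk : j ≠ k) (hki : k ≠ i) :
    xbar n i j * xbar n j k = xbar n j k * xbar n i k + xbar n i k * xbar n i j := by
  have h0 : xbar n i j * xbar n j k + xbar n j k * xbar n k i + xbar n k i * xbar n i j = 0 := by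
    rw [xbar, xbar, xbar, dif_pos hij, dif_pos hjk, dif_pos hki]
    rw [← map_mul, ← map_mul, ← map_mul, ← map_add, ← map_add,
      Ideal.Quotient.eq_zero_iff_mem]
    exact Ideal.subset_span (Or.inr ⟨i, j, k, hij, hjk, hki, rfl⟩)
  rw [xbar_antisymm n i k] at h0
  linear_combination h0

lemma VGperm_mk (σ : Equiv.Perm (Fin (n+1))) (p : MvPolynomial (VGidx n) ℚ) :
    VGperm n σ (Ideal.Quotient.mk (VGrel n) p)
      = Ideal.Quotient.mk (VGrel n) (MvPolynomial.rename (VGpermIdx n σ) p) := rfl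

lemma VGperm_xbar (σ : Equiv.Perm (Fin (n+1))) (i j : Fin (n+1)) :
    VGperm n σ (xbar n i j) = xbar n (σ i) (σ j) := by
  by_cases h : i ≠ j
  · rw [xbar, dif_pos h, VGperm_mk, MvPolynomial.rename_X, xbar_mk]
    rfl
  · push_neg at h
    subst h
    rw [xbar_self, xbar_self, map_zero]

lemma VGperm_comp (σ τ : Equiv.Perm (Fin (n+1))) (x : VG n) :
    VGperm n σ (VGperm n τ x) = VGperm n (σ * τ) x := by
  have : (VGperm n σ).comp (VGperm n τ) = VGperm n (σ * τ) := by
    apply Ideal.Quotient.algHom_ext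
    apply MvPolynomial.algHom_ext
    intro v
    simp only [AlgHom.comp_apply, Ideal.Quotient.mkₐ_eq_mk]
    rw [xbar_mk, VGperm_xbar, VGperm_xbar, VGperm_xbar]
    rfl
  have h2 := AlgHom.congr_fun this x
  simpa using h2

lemma VGperm_one (x : VG n) : VGperm n 1 x = x := by
  have : VGperm n 1 = AlgHom.id ℚ (VG n) := by
    apply Ideal.Quotient.algHom_ext
    apply MvPolynomial.algHom_ext
    intro v
    simp only [AlgHom.comp_apply, Ideal.Quotient.mkₐ_eq_mk, AlgHom.id_apply]
    rw [xbar_mk, VGperm_xbar]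
    simp [xbar_mk]
  rw [this]
  rfl

lemma star_identity : ∀ (T : Finset (Fin (n+1))), T.Nonempty → ∀ a ∉ T,
    ∑ b ∈ T, (∏ j ∈ T.erase b, xbar n j b) * xbar n b a = ∏ j ∈ T, xbar n j a := by
  intro T
  induction T using Finset.induction_on with
  | empty => intro h; exact absurd h (by simp)
  | @insert t T htT IH =>
    intro _ a ha
    have hat : a ≠ t := fun h => ha (h ▸ Finset.mem_insert_self t T)
    have haT : a ∉ T := fun h => ha (Finset.mem_insert_of_mem h)
    by_cases hTe : T = ∅
    · subst hTe
      simp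
    · have hTne : T.Nonempty := Finset.nonempty_of_ne_empty hTe
      rw [Finset.sum_insert htT, Finset.erase_insert htT]
      have hstep : ∀ b ∈ T, (∏ j ∈ (insert t T).erase b, xbar n j b) * xbar n b a
          = ((∏ j ∈ T.erase b, xbar n j b) * xbar n b a) * xbar n t a
            + xbar n t a * ((∏ j ∈ T.erase b, xbar n j b) * xbar n t b) := by
        intro b hb
        have hbt : b ≠ t := fun h => htT (h ▸ hb)
        have htTb : t ∉ T.erase b := fun h => htT (Finset.mem_of_mem_erase h)
        rw [Finset.erase_insert_of_ne hbt.symm, Finset.prod_insert htTb]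
        have tri := xbar_triangle n t b a hbt.symm (fun h => haT (h ▸ hb)) hat
        linear_combination (∏ j ∈ T.erase b, xbar n j b) * tri
      rw [Finset.sum_congr rfl hstep, Finset.sum_add_distrib, ← Finset.sum_mul, ← Finset.mul_sum]
      rw [IH hTne a haT]
      have h2 : ∑ b ∈ T, (∏ j ∈ T.erase b, xbar n j b) * xbar n t b
          = - ∏ j ∈ T, xbar n j t := by
        have hr : ∀ b ∈ T, (∏ j ∈ T.erase b, xbar n j b) * xbar n t b
            = - ((∏ j ∈ T.erase b, xbar n j b) * xbar n b t) := by
          intro b hb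
          rw [xbar_antisymm n b t]
          ring
        rw [Finset.sum_congr rfl hr,
          show ∑ b ∈ T, -((∏ j ∈ T.erase b, xbar n j b) * xbar n b t)
              = -∑ b ∈ T, (∏ j ∈ T.erase b, xbar n j b) * xbar n b t by simp,
          IH hTne t htT]
      rw [h2, Finset.prod_insert htT]
      ring

lemma star_vanish (T : Finset (Fin (n+1))) (hT : 2 ≤ T.card) :
    ∑ b ∈ T, ∏ j ∈ T.erase b, xbar n j b = 0 := by
  obtain ⟨t, ht⟩ := Finset.card_pos.mp (Nat.lt_of_lt_of_le Nat.zero_lt_two hT)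
  have hT0 : (T.erase t).Nonempty := by
    rw [← Finset.card_pos, Finset.card_erase_of_mem ht]
    omega
  rw [← Finset.insert_erase ht, Finset.sum_insert (Finset.notMem_erase t T),
    Finset.erase_insert (Finset.notMem_erase t T)]
  have hstep : ∀ b ∈ T.erase t, ∏ j ∈ (insert t (T.erase t)).erase b, xbar n j b
      = ((∏ j ∈ (T.erase t).erase b, xbar n j b) * xbar n b t) * (-1) := by
    intro b hb
    have hbt : b ≠ t := (Finset.mem_erase.mp hb).1
    have htTb : t ∉ (T.erase t).erase b := fun h =>
      (Finset.notMem_erase t T) (Finset.mem_of_mem_erase h)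
    rw [Finset.erase_insert_of_ne hbt.symm, Finset.prod_insert htTb, xbar_antisymm n b t]
    ring
  rw [Finset.sum_congr rfl hstep, ← Finset.sum_mul, star_identity n (T.erase t) hT0 t
    (Finset.notMem_erase t T)]
  ring

/-! ### The pointwise stabilizer and Reynolds operator -/

def HF (U : Finset (Fin (n+1))) : Finset (Equiv.Perm (Fin (n+1))) :=
  Finset.univ.filter (fun σ => ∀ x ∉ U, σ x = x)

lemma mem_HF {U : Finset (Fin (n+1))} {σ : Equiv.Perm (Fin (n+1))} :
    σ ∈ HF n U ↔ ∀ x ∉ U, σ x = x := by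
  simp [HF]

lemma HF_one (U : Finset (Fin (n+1))) : 1 ∈ HF n U := by
  simp [mem_HF]

lemma HF_mul {U : Finset (Fin (n+1))} {σ τ : Equiv.Perm (Fin (n+1))}
    (hσ : σ ∈ HF n U) (hτ : τ ∈ HF n U) : σ * τ ∈ HF n U := by
  rw [mem_HF] at hσ hτ ⊢
  intro x hx
  rw [Equiv.Perm.mul_apply, hτ x hx, hσ x hx]

lemma HF_inv {U : Finset (Fin (n+1))} {σ : Equiv.Perm (Fin (n+1))}
    (hσ : σ ∈ HF n U) : σ⁻¹ ∈ HF n U := by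
  rw [mem_HF] at hσ ⊢
  intro x hx
  have := hσ x hx
  conv_lhs => rw [← this]
  simp

lemma HF_mono {U V : Finset (Fin (n+1))} (h : U ⊆ V) : HF n U ⊆ HF n V := by
  intro σ hσ
  rw [mem_HF] at hσ ⊢
  intro x hx
  exact hσ x (fun hxU => hx (h hxU))

lemma HF_maps {U : Finset (Fin (n+1))} {σ : Equiv.Perm (Fin (n+1))}
    (hσ : σ ∈ HF n U) {i : Fin (n+1)} (hi : i ∈ U) : σ i ∈ U := by
  by_contra h
  rw [mem_HF] at hσ
  have h2 := hσ (σ i) h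
  have := σ.injective h2
  rw [← this] at hi
  exact h hi

lemma HF_image {U : Finset (Fin (n+1))} {σ : Equiv.Perm (Fin (n+1))}
    (hσ : σ ∈ HF n U) : U.image σ = U := by
  apply Finset.eq_of_subset_of_card_le
  · intro x hx
    obtain ⟨y, hy, rfl⟩ := Finset.mem_image.mp hx
    exact HF_maps n hσ hy
  · rw [Finset.card_image_of_injective U σ.injective]

lemma HF_card_pos (U : Finset (Fin (n+1))) : 0 < (HF n U).card :=
  Finset.card_pos.mpr ⟨1, HF_one n U⟩

/-- The Reynolds (averaging) operator for the pointwise stabilizer of the complement of `U`. -/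
def Rey (U : Finset (Fin (n+1))) : VG n →ₗ[ℚ] VG n :=
  (((HF n U).card : ℚ)⁻¹) • ∑ σ ∈ HF n U, (VGperm n σ).toLinearMap

lemma Rey_apply (U : Finset (Fin (n+1))) (x : VG n) :
    Rey n U x = (((HF n U).card : ℚ)⁻¹) • ∑ σ ∈ HF n U, VGperm n σ x := by
  simp [Rey, LinearMap.sum_apply]

lemma Rey_fixed {U : Finset (Fin (n+1))} {x : VG n}
    (h : ∀ σ ∈ HF n U, VGperm n σ x = x) : Rey n U x = x := by
  rw [Rey_apply, Finset.sum_congr rfl h, Finset.sum_const, ← Nat.cast_smul_eq_nsmul ℚ,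
    smul_smul, inv_mul_cancel₀ (by exact_mod_cast (HF_card_pos n U).ne'), one_smul]

lemma Rey_one (U : Finset (Fin (n+1))) : Rey n U 1 = 1 :=
  Rey_fixed n (fun σ _ => map_one _)

lemma Rey_perm {U : Finset (Fin (n+1))} {τ : Equiv.Perm (Fin (n+1))}
    (hτ : τ ∈ HF n U) (x : VG n) : Rey n U (VGperm n τ x) = Rey n U x := by
  rw [Rey_apply, Rey_apply]
  congr 1
  rw [Finset.sum_congr rfl (fun σ _ => VGperm_comp n σ τ x)]
  refine Finset.sum_bij' (fun σ _ => σ * τ) (fun σ _ => σ * τ⁻¹) ?_ ?_ ?_ ?_ ?_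
  · intro σ hσ; exact HF_mul n hσ hτ
  · intro σ hσ; exact HF_mul n hσ (HF_inv n hτ)
  · intro σ _; group
  · intro σ _; group
  · intro σ _; rfl

lemma Rey_comp {U V : Finset (Fin (n+1))} (h : V ⊆ U) (x : VG n) :
    Rey n U (Rey n V x) = Rey n U x := by
  rw [Rey_apply n V, map_smul, map_sum]
  rw [Finset.sum_congr rfl (fun τ hτ => Rey_perm n (HF_mono n h hτ) x), Finset.sum_const,
    ← Nat.cast_smul_eq_nsmul ℚ, smul_smul,
    inv_mul_cancel₀ (by exact_mod_cast (HF_card_pos n V).ne'), one_smul]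

lemma Rey_mul_fixed {U : Finset (Fin (n+1))} {w : VG n}
    (hw : ∀ σ ∈ HF n U, VGperm n σ w = w) (x : VG n) :
    Rey n U (x * w) = Rey n U x * w := by
  rw [Rey_apply, Rey_apply, smul_mul_assoc, Finset.sum_mul]
  congr 1
  apply Finset.sum_congr rfl
  intro σ hσ
  rw [map_mul, hw σ hσ]

lemma Rey_orbit {U : Finset (Fin (n+1))} (y : Fin (n+1) → VG n)
    (hy : ∀ σ ∈ HF n U, ∀ i ∈ U, VGperm n σ (y i) = y (σ i))
    {i : Fin (n+1)} (hi : i ∈ U) :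
    Rey n U (y i) = ((U.card : ℚ)⁻¹) • ∑ i' ∈ U, y i' := by
  classical
  have hmaps : ∀ σ ∈ HF n U, σ i ∈ U := fun σ hσ => HF_maps n hσ hi
  -- fibers of σ ↦ σ i have equal cardinality
  have heq : ∀ i₁ ∈ U, ∀ i₂ ∈ U,
      ((HF n U).filter (fun σ => σ i = i₁)).card
        = ((HF n U).filter (fun σ => σ i = i₂)).card := by
    intro i₁ h₁ i₂ h₂
    have hswap : Equiv.swap i₁ i₂ ∈ HF n U := by
      rw [mem_HF]
      intro x hx
      exact Equiv.swap_apply_of_ne_of_ne (fun h => hx (h ▸ h₁)) (fun h => hx (h ▸ h₂))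
    apply Finset.card_bij' (fun σ _ => Equiv.swap i₁ i₂ * σ) (fun σ _ => Equiv.swap i₁ i₂ * σ)
    · intro σ hσ
      rw [Finset.mem_filter] at hσ ⊢
      refine ⟨HF_mul n hswap hσ.1, ?_⟩
      rw [Equiv.Perm.mul_apply, hσ.2, Equiv.swap_apply_left]
    · intro σ hσ
      rw [Finset.mem_filter] at hσ ⊢
      refine ⟨HF_mul n hswap hσ.1, ?_⟩
      rw [Equiv.Perm.mul_apply, hσ.2, Equiv.swap_apply_right]
    · intro σ _; rw [← mul_assoc, Equiv.swap_mul_self, one_mul]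
    · intro σ _; rw [← mul_assoc, Equiv.swap_mul_self, one_mul]
  have hfib : ∀ i' ∈ U, ((HF n U).filter (fun σ => σ i = i')).card * U.card = (HF n U).card := by
    intro i' hi'
    have hcardsum := Finset.card_eq_sum_card_fiberwise hmaps
    rw [Finset.sum_congr rfl (fun i'' hi'' => heq i'' hi'' i' hi')] at hcardsum
    rw [hcardsum, Finset.sum_const, smul_eq_mul, mul_comm]
  have hmain : ∑ σ ∈ HF n U, VGperm n σ (y i) = ∑ i' ∈ U,
      ((HF n U).filter (fun σ => σ i = i')).card • y i' := by
    rw [Finset.sum_congr rfl (fun σ hσ => hy σ hσ i hi),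
      ← Finset.sum_fiberwise_of_maps_to hmaps (fun σ => y (σ i))]
    apply Finset.sum_congr rfl
    intro i' _
    rw [Finset.sum_congr rfl
      (fun σ hσ => by rw [(Finset.mem_filter.mp hσ).2]), Finset.sum_const]
  rw [Rey_apply, hmain, Finset.smul_sum, Finset.smul_sum]
  apply Finset.sum_congr rfl
  intro i' hi'
  rw [← Nat.cast_smul_eq_nsmul ℚ, smul_smul]
  congr 1
  have h1 : ((HF n U).card : ℚ) ≠ 0 := by exact_mod_cast (HF_card_pos n U).ne'
  have h2 : ((U.card : ℚ)) ≠ 0 := by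
    exact_mod_cast (Finset.card_pos.mpr ⟨i, hi⟩).ne'
  have h3 : ((((HF n U).filter (fun σ => σ i = i')).card : ℚ) * (U.card : ℚ))
      = ((HF n U).card : ℚ) := by exact_mod_cast hfib i' hi'
  field_simp
  linear_combination h3

/-! ### Subalgebras generated by the variables within a subset, and the key spanning lemma -/

def Bsub (V : Finset (Fin (n+1))) : Subalgebra ℚ (VG n) :=
  Algebra.adjoin ℚ {w | ∃ i ∈ V, ∃ j ∈ V, w = xbar n i j}

lemma xbar_mem_Bsub {V : Finset (Fin (n+1))} {i j : Fin (n+1)} (hi : i ∈ V) (hj : j ∈ V) :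
    xbar n i j ∈ Bsub n V :=
  Algebra.subset_adjoin ⟨i, hi, j, hj, rfl⟩

lemma Bsub_univ (x : VG n) : x ∈ Bsub n Finset.univ := by
  obtain ⟨p, rfl⟩ := Ideal.Quotient.mk_surjective x
  induction p using MvPolynomial.induction_on with
  | C a =>
    have h : Ideal.Quotient.mk (VGrel n) (MvPolynomial.C a) = algebraMap ℚ (VG n) a := rfl
    rw [h]
    exact Subalgebra.algebraMap_mem _ a
  | add p q hp hq =>
    rw [map_add]
    exact Subalgebra.add_mem _ hp hq
  | mul_X p v hp =>
    rw [map_mul]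
    exact Subalgebra.mul_mem _ hp (by rw [xbar_mk]; exact xbar_mem_Bsub n (by simp) (by simp))

lemma Bsub_singleton (a : Fin (n+1)) (x : VG n) (hx : x ∈ Bsub n {a}) :
    ∃ c : ℚ, x = algebraMap ℚ (VG n) c := by
  have h : Bsub n {a} ≤ ⊥ := by
    apply Algebra.adjoin_le
    rintro w ⟨i, hi, j, hj, rfl⟩
    rw [Finset.mem_singleton] at hi hj
    subst hi; subst hj
    rw [xbar_self]
    exact Subalgebra.zero_mem _
  obtain ⟨c, hc⟩ := Algebra.mem_bot.mp (h hx)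
  exact ⟨c, hc.symm⟩

/-- The submodule spanned by `B_U` and the translates `B_U · x_{ia}`. -/
def Wmod (U : Finset (Fin (n+1))) (a : Fin (n+1)) : Submodule ℚ (VG n) :=
  Submodule.span ℚ ((Bsub n U : Set (VG n)) ∪
    ⋃ i ∈ U, (fun b => b * xbar n i a) '' (Bsub n U : Set (VG n)))

lemma mem_W_left {U : Finset (Fin (n+1))} {a : Fin (n+1)} {b : VG n} (hb : b ∈ Bsub n U) :
    b ∈ Wmod n U a :=
  Submodule.subset_span (Or.inl hb)

lemma mem_W_right {U : Finset (Fin (n+1))} {a : Fin (n+1)} {b : VG n} {i : Fin (n+1)}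
    (hi : i ∈ U) (hb : b ∈ Bsub n U) : b * xbar n i a ∈ Wmod n U a :=
  Submodule.subset_span (Or.inr (Set.mem_biUnion hi ⟨b, hb, rfl⟩))

lemma Wmod_mul {U : Finset (Fin (n+1))} {a : Fin (n+1)} (ha : a ∉ U) :
    ∀ (x y : VG n), x ∈ Wmod n U a → y ∈ Wmod n U a → x * y ∈ Wmod n U a := by
  intro x y hx hy
  have hmul : Wmod n U a * Wmod n U a ≤ Wmod n U a := by
    rw [Wmod, Submodule.span_mul_span, Submodule.span_le]
    intro z hz
    rw [Set.mem_mul] at hz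
    obtain ⟨s, hs, t, ht, rfl⟩ := hz
    have hBB : ∀ (b c : VG n), b ∈ Bsub n U → c ∈ Bsub n U → b * c ∈ Wmod n U a :=
      fun b c hb hc => mem_W_left n (Subalgebra.mul_mem _ hb hc)
    have hBX : ∀ (b c : VG n), b ∈ Bsub n U → c ∈ Bsub n U → ∀ j ∈ U,
        b * (c * xbar n j a) ∈ Wmod n U a := by
      intro b c hb hc j hj
      rw [← mul_assoc]
      exact mem_W_right n hj (Subalgebra.mul_mem _ hb hc)
    rcases hs with hsB | hsX <;> rcases ht with htB | htX
    · exact hBB _ _ hsB htB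
    · obtain ⟨j, hj, c, hc, rfl⟩ := by
        simpa only [Set.mem_iUnion, Set.mem_image, exists_prop] using htX
      exact hBX _ _ hsB hc j hj
    · obtain ⟨i, hi, b, hb, rfl⟩ := by
        simpa only [Set.mem_iUnion, Set.mem_image, exists_prop] using hsX
      rw [mul_comm]
      exact hBX _ _ htB hb i hi
    · obtain ⟨i, hi, b, hb, rfl⟩ := by
        simpa only [Set.mem_iUnion, Set.mem_image, exists_prop] using hsX
      obtain ⟨j, hj, c, hc, rfl⟩ := by
        simpa only [Set.mem_iUnion, Set.mem_image, exists_prop] using htX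
      by_cases hij : i = j
      · subst hij
        have h0 : (b * xbar n i a) * (c * xbar n i a) = 0 := by
          have := xbar_sq n i a
          linear_combination (b * c) * this
        rw [h0]
        exact Submodule.zero_mem _
      · have hia : i ≠ a := fun h => ha (h ▸ hi)
        have hja : j ≠ a := fun h => ha (h ▸ hj)
        have tri := xbar_triangle n i j a hij hja hia.symm
        have hE : (b * xbar n i a) * (c * xbar n j a)
            = (b * c * xbar n i j) * xbar n j a - (b * c * xbar n i j) * xbar n i a := by
          linear_combination (-(b * c)) * tri
        rw [hE]
        exact Submodule.sub_mem _
          (mem_W_right n hj (Subalgebra.mul_mem _ (Subalgebra.mul_mem _ hb hc)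
            (xbar_mem_Bsub n hi hj)))
          (mem_W_right n hi (Subalgebra.mul_mem _ (Subalgebra.mul_mem _ hb hc)
            (xbar_mem_Bsub n hi hj)))
  exact hmul (Submodule.mul_mem_mul hx hy)

lemma Wmod_spans {U : Finset (Fin (n+1))} {a : Fin (n+1)} (ha : a ∉ U) {x : VG n}
    (hx : x ∈ Bsub n (insert a U)) : x ∈ Wmod n U a := by
  have h1 : (1 : VG n) ∈ Wmod n U a := mem_W_left n (Subalgebra.one_mem _)
  have hle : Bsub n (insert a U) ≤ (Wmod n U a).toSubalgebra h1 (Wmod_mul n ha) := by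
    apply Algebra.adjoin_le
    rintro w ⟨i, hi, j, hj, rfl⟩
    show xbar n i j ∈ Wmod n U a
    rcases Finset.mem_insert.mp hi with rfl | hiU <;> rcases Finset.mem_insert.mp hj with hj' | hjU
    · rw [hj', xbar_self]
      exact Submodule.zero_mem _
    · have hm := mem_W_right n (a := i) hjU (Subalgebra.one_mem (Bsub n U))
      rw [one_mul] at hm
      rw [xbar_antisymm n j i]
      exact Submodule.neg_mem _ hm
    · subst hj'
      have hm := mem_W_right n (a := j) hiU (Subalgebra.one_mem (Bsub n U))
      rw [one_mul] at hm
      exact hm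
    · exact mem_W_left n (xbar_mem_Bsub n hiU hjU)
  exact hle hx

/-! ### The elements `z_{U,a}` and the main induction -/

def zV (U : Finset (Fin (n+1))) (a : Fin (n+1)) : VG n := ∑ j ∈ U, xbar n j a

lemma zV_def (U : Finset (Fin (n+1))) (a : Fin (n+1)) : zV n U a = ∑ j ∈ U, xbar n j a := rfl

lemma VGperm_zV (σ : Equiv.Perm (Fin (n+1))) (V : Finset (Fin (n+1))) (b : Fin (n+1)) :
    VGperm n σ (zV n V b) = zV n (V.image σ) (σ b) := by
  rw [zV, map_sum, zV, Finset.sum_image (fun x _ y _ h => σ.injective h)]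
  exact Finset.sum_congr rfl fun j _ => VGperm_xbar n σ j b

lemma map_mem_span_range {g : ℕ → VG n} (f : VG n →ₗ[ℚ] VG n) (Z : Submodule ℚ (VG n))
    (h : ∀ k, f (g k) ∈ Z) {c : VG n} (hc : c ∈ Submodule.span ℚ (Set.range g)) : f c ∈ Z := by
  induction hc using Submodule.span_induction with
  | mem x hx => obtain ⟨k, rfl⟩ := hx; exact h k
  | zero => rw [map_zero]; exact Z.zero_mem
  | add x y _ _ hx hy => rw [map_add]; exact Z.add_mem hx hy
  | smul r x _ hx => rw [map_smul]; exact Z.smul_mem r hx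

lemma zpow_equivariant {U : Finset (Fin (n+1))} {σ : Equiv.Perm (Fin (n+1))}
    (hσ : σ ∈ HF n U) {i' : Fin (n+1)} (hi' : i' ∈ U) (k : ℕ) :
    VGperm n σ (zV n (U.erase i') i' ^ k) = zV n (U.erase (σ i')) (σ i') ^ k := by
  rw [map_pow, VGperm_zV, Finset.image_erase σ.injective, HF_image n hσ]

lemma Rey_z_pow {U : Finset (Fin (n+1))} {i : Fin (n+1)} (hi : i ∈ U) (k : ℕ) (hk : 1 ≤ k) :
    Rey n U (zV n (U.erase i) i ^ k) = 0 := by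
  have horb := Rey_orbit n (U := U) (fun i' => zV n (U.erase i') i' ^ k)
    (fun σ hσ i' hi' => zpow_equivariant n hσ hi' k) hi
  rw [horb]
  have hsum : ∑ i' ∈ U, zV n (U.erase i') i' ^ k = 0 := by
    rw [Finset.sum_congr rfl (fun i' _ => by
        rw [zV_def, sq_expand (U.erase i') (fun j => xbar n j i') (fun j _ => xbar_sq n j i') k]),
      ← Finset.smul_sum, pair_sum U k (fun b S => ∏ j ∈ S, xbar n j b)]
    rw [Finset.sum_congr rfl (fun T hT => star_vanish n T
      (by rw [(Finset.mem_powersetCard.mp hT).2]; omega))]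
    simp
  rw [hsum, smul_zero]

lemma Rey_z_pow_mul {U : Finset (Fin (n+1))} {a : Fin (n+1)} (ha : a ∉ U) {i : Fin (n+1)}
    (hi : i ∈ U) (k : ℕ) :
    Rey n U (zV n (U.erase i) i ^ k * xbar n i a)
      ∈ Submodule.span ℚ (Set.range fun k : ℕ => zV n U a ^ k) := by
  have hequiv : ∀ σ ∈ HF n U, ∀ i' ∈ U,
      VGperm n σ (zV n (U.erase i') i' ^ k * xbar n i' a)
        = zV n (U.erase (σ i')) (σ i') ^ k * xbar n (σ i') a := by
    intro σ hσ i' hi'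
    rw [map_mul, zpow_equivariant n hσ hi' k, VGperm_xbar, (mem_HF n).mp hσ a ha]
  have horb := Rey_orbit n (U := U) (fun i' => zV n (U.erase i') i' ^ k * xbar n i' a) hequiv hi
  rw [horb]
  have hsum : ∑ i' ∈ U, zV n (U.erase i') i' ^ k * xbar n i' a
      = k.factorial • ∑ T ∈ U.powersetCard (k+1), ∏ j ∈ T, xbar n j a := by
    have hexp : ∀ i' ∈ U, zV n (U.erase i') i' ^ k * xbar n i' a
        = k.factorial • ∑ S ∈ (U.erase i').powersetCard k,
            (∏ j ∈ S, xbar n j i') * xbar n i' a := by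
      intro i' _
      rw [zV_def, sq_expand (U.erase i') (fun j => xbar n j i') (fun j _ => xbar_sq n j i') k,
        smul_mul_assoc, Finset.sum_mul]
    rw [Finset.sum_congr rfl hexp, ← Finset.smul_sum,
      pair_sum U k (fun b S => (∏ j ∈ S, xbar n j b) * xbar n b a)]
    congr 1
    apply Finset.sum_congr rfl
    intro T hT
    rw [Finset.mem_powersetCard] at hT
    exact star_identity n T (Finset.card_pos.mp (by omega)) a (fun haT => ha (hT.1 haT))
  have hz : zV n U a ^ (k+1)
      = (k+1).factorial • ∑ T ∈ U.powersetCard (k+1), ∏ j ∈ T, xbar n j a := by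
    rw [zV_def]
    exact sq_expand U (fun j => xbar n j a) (fun j _ => xbar_sq n j a) (k+1)
  have hST : ∑ T ∈ U.powersetCard (k+1), ∏ j ∈ T, xbar n j a
      = (((k+1).factorial : ℚ))⁻¹ • zV n U a ^ (k+1) := by
    rw [hz, ← Nat.cast_smul_eq_nsmul ℚ, smul_smul, inv_mul_cancel₀
      (by exact_mod_cast (Nat.factorial_pos (k+1)).ne'), one_smul]
  rw [hsum, hST, ← Nat.cast_smul_eq_nsmul ℚ, smul_smul, smul_smul]
  exact Submodule.smul_mem _ _ (Submodule.subset_span ⟨k+1, rfl⟩)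

lemma main_ind : ∀ (m : ℕ) (U : Finset (Fin (n+1))) (a : Fin (n+1)), U.card ≤ m → a ∉ U →
    ∀ x ∈ Bsub n (insert a U),
      Rey n U x ∈ Submodule.span ℚ (Set.range fun k : ℕ => zV n U a ^ k) := by
  intro m
  induction m with
  | zero =>
    intro U a hcard ha x hx
    have hU : U = ∅ := Finset.card_eq_zero.mp (Nat.le_zero.mp hcard)
    subst hU
    obtain ⟨c, rfl⟩ := Bsub_singleton n a x (by simpa using hx)
    rw [Rey_fixed n (fun σ _ => AlgHom.commutes _ c)]
    have h1 : algebraMap ℚ (VG n) c = c • (zV n ∅ a ^ 0) := by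
      simp [Algebra.algebraMap_eq_smul_one]
    rw [h1]
    exact Submodule.smul_mem _ c (Submodule.subset_span ⟨0, rfl⟩)
  | succ m IH =>
    intro U a hcard ha x hx
    by_cases hUe : U = ∅
    · subst hUe
      obtain ⟨c, rfl⟩ := Bsub_singleton n a x (by simpa using hx)
      rw [Rey_fixed n (fun σ _ => AlgHom.commutes _ c)]
      have h1 : algebraMap ℚ (VG n) c = c • (zV n ∅ a ^ 0) := by
        simp [Algebra.algebraMap_eq_smul_one]
      rw [h1]
      exact Submodule.smul_mem _ c (Submodule.subset_span ⟨0, rfl⟩)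
    have hUne : U.Nonempty := Finset.nonempty_of_ne_empty hUe
    have hxW := Wmod_spans n ha hx
    clear hx
    induction hxW using Submodule.span_induction with
    | mem w hw =>
      have hone : Rey n U (1 : VG n) ∈ Submodule.span ℚ (Set.range fun k : ℕ => zV n U a ^ k) := by
        rw [Rey_one]
        exact Submodule.subset_span ⟨0, by simp⟩
      rcases hw with hB | hRest
      · -- w ∈ Bsub n U
        obtain ⟨i, hi⟩ := hUne
        rw [← Rey_comp n (Finset.erase_subset i U) w]
        have hw2 : w ∈ Bsub n (insert i (U.erase i)) := by
          rw [Finset.insert_erase hi]; exact hB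
        have hcard2 : (U.erase i).card ≤ m := by
          rw [Finset.card_erase_of_mem hi]
          have : 1 ≤ U.card := Finset.card_pos.mpr ⟨i, hi⟩
          omega
        have hmem := IH (U.erase i) i hcard2 (Finset.notMem_erase i U) w hw2
        refine map_mem_span_range n (Rey n U) _ ?_ hmem
        intro k
        cases k with
        | zero => rw [pow_zero]; exact hone
        | succ k' =>
          rw [Rey_z_pow n hi (k'+1) (by omega)]
          exact Submodule.zero_mem _
      · obtain ⟨i, hi, b, hb, rfl⟩ := by
          simpa only [Set.mem_iUnion, Set.mem_image, exists_prop] using hRest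
        rw [← Rey_comp n (Finset.erase_subset i U) _]
        have hfix : ∀ σ ∈ HF n (U.erase i), VGperm n σ (xbar n i a) = xbar n i a := by
          intro σ hσ
          rw [VGperm_xbar, (mem_HF n).mp hσ i (Finset.notMem_erase i U),
            (mem_HF n).mp hσ a (fun h => ha (Finset.mem_of_mem_erase h))]
        rw [Rey_mul_fixed n hfix b]
        have hb2 : b ∈ Bsub n (insert i (U.erase i)) := by
          rw [Finset.insert_erase hi]; exact hb
        have hcard2 : (U.erase i).card ≤ m := by
          rw [Finset.card_erase_of_mem hi]
          have : 1 ≤ U.card := Finset.card_pos.mpr ⟨i, hi⟩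
          omega
        have hmem := IH (U.erase i) i hcard2 (Finset.notMem_erase i U) b hb2
        refine map_mem_span_range n
          ((Rey n U).comp (LinearMap.mulRight ℚ (xbar n i a))) _ ?_ hmem
        intro k
        exact Rey_z_pow_mul n ha hi k
    | zero =>
      rw [map_zero]
      exact Submodule.zero_mem _
    | add u v _ _ hu hv =>
      rw [map_add]
      exact Submodule.add_mem _ hu hv
    | smul r u _ hu =>
      rw [map_smul]
      exact Submodule.smul_mem _ r hu

/-! ### The target ring `ℚ[t_1,…,t_n]/(t_i^2)` and the comparison map -/

def SqIdeal : Ideal (MvPolynomial (Fin n) ℚ) :=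
  Ideal.span {q | ∃ i : Fin n, q = MvPolynomial.X i ^ 2}

abbrev Rng := MvPolynomial (Fin n) ℚ ⧸ SqIdeal n

def TT (i : Fin (n+1)) : Rng n :=
  if h : (i : ℕ) < n then Ideal.Quotient.mk (SqIdeal n) (MvPolynomial.X ⟨(i : ℕ), h⟩) else 0

lemma TT_sq (i : Fin (n+1)) : TT n i * TT n i = 0 := by
  rw [TT]
  split
  · rw [← map_mul, ← sq, Ideal.Quotient.eq_zero_iff_mem]
    exact Ideal.subset_span ⟨_, rfl⟩
  · rw [mul_zero]

def fmap : VGidx n → Rng n :=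
  fun v => if v.1.1 < v.1.2 then TT n v.1.1 else - TT n v.1.2

lemma fmap_lt {i j : Fin (n+1)} (h : i < j) (hne : i ≠ j) :
    fmap n ⟨(i,j),hne⟩ = TT n i := by simp [fmap, h]

lemma fmap_gt {i j : Fin (n+1)} (h : j < i) (hne : i ≠ j) :
    fmap n ⟨(i,j),hne⟩ = - TT n j := by simp [fmap, asymm h]

lemma fmap_ker : ∀ a ∈ VGrel n, MvPolynomial.aeval (fmap n) a = 0 := by
  have hle : VGrel n ≤ RingHom.ker (MvPolynomial.aeval (fmap n)).toRingHom := by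
    rw [VGrel]
    apply Ideal.span_le.mpr
    rintro q hq
    rw [SetLike.mem_coe, RingHom.mem_ker]
    simp only [Set.mem_union, Set.mem_setOf_eq] at hq
    rcases hq with ((⟨v, rfl⟩ | ⟨i, j, hij, rfl⟩) | ⟨i, j, k, hij, hjk, hki, rfl⟩)
    · show MvPolynomial.aeval (fmap n) (MvPolynomial.X v ^ 2) = 0
      rw [map_pow, MvPolynomial.aeval_X, sq, fmap]
      split
      · exact TT_sq n _
      · linear_combination TT_sq n v.1.2
    · show MvPolynomial.aeval (fmap n) (MvPolynomial.X _ + MvPolynomial.X _) = 0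
      rw [map_add, MvPolynomial.aeval_X, MvPolynomial.aeval_X]
      rcases lt_or_gt_of_ne hij with h | h
      · rw [fmap_lt n h hij, fmap_gt n h hij.symm]
        ring
      · rw [fmap_gt n h hij, fmap_lt n h hij.symm]
        ring
    · show MvPolynomial.aeval (fmap n)
        (MvPolynomial.X _ * MvPolynomial.X _ + MvPolynomial.X _ * MvPolynomial.X _
          + MvPolynomial.X _ * MvPolynomial.X _) = 0
      rw [map_add, map_add, map_mul, map_mul, map_mul]
      rw [MvPolynomial.aeval_X, MvPolynomial.aeval_X, MvPolynomial.aeval_X]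
      rcases lt_or_gt_of_ne hij with h1 | h1 <;> rcases lt_or_gt_of_ne hjk with h2 | h2 <;>
        rcases lt_or_gt_of_ne hki with h3 | h3
      · exact absurd (h1.trans h2) (asymm h3)
      · rw [fmap_lt n h1 hij, fmap_lt n h2 hjk, fmap_gt n h3 hki]
        linear_combination -TT_sq n i
      · rw [fmap_lt n h1 hij, fmap_gt n h2 hjk, fmap_lt n h3 hki]
        linear_combination -TT_sq n k
      · rw [fmap_lt n h1 hij, fmap_gt n h2 hjk, fmap_gt n h3 hki]
        linear_combination -TT_sq n i
      · rw [fmap_gt n h1 hij, fmap_lt n h2 hjk, fmap_lt n h3 hki]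
        linear_combination -TT_sq n j
      · rw [fmap_gt n h1 hij, fmap_lt n h2 hjk, fmap_gt n h3 hki]
        linear_combination -TT_sq n j
      · rw [fmap_gt n h1 hij, fmap_gt n h2 hjk, fmap_lt n h3 hki]
        linear_combination -TT_sq n k
      · exact absurd (h3.trans h2) (asymm h1)
  intro a ha
  have := hle ha
  rwa [RingHom.mem_ker] at this

def phi : VG n →ₐ[ℚ] Rng n :=
  Ideal.Quotient.liftₐ (VGrel n) (MvPolynomial.aeval (fmap n)) (fmap_ker n)

lemma phi_mk (p : MvPolynomial (VGidx n) ℚ) :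
    phi n (Ideal.Quotient.mk (VGrel n) p) = MvPolynomial.aeval (fmap n) p := rfl

def ebar : Rng n := ∑ i : Fin n, Ideal.Quotient.mk (SqIdeal n) (MvPolynomial.X i)

lemma phi_zVG : phi n (zVG n) = ebar n := by
  rw [zVG, phi_mk, map_sum, ebar]
  apply Finset.sum_congr rfl
  intro i _
  rw [MvPolynomial.aeval_X, fmap_lt n (Fin.castSucc_lt_last i) (Fin.castSucc_lt_last i).ne, TT,
    dif_pos (by exact i.isLt)]
  congr 1

lemma coeff_SqIdeal {p : MvPolynomial (Fin n) ℚ} (hp : p ∈ SqIdeal n) :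
    ∀ (m : Fin n →₀ ℕ), (∀ i, m i ≤ 1) → MvPolynomial.coeff m p = 0 := by
  induction hp using Submodule.span_induction with
  | mem q hq =>
    obtain ⟨i, rfl⟩ := hq
    intro m hm
    rw [MvPolynomial.X_pow_eq_monomial, MvPolynomial.coeff_monomial]
    split
    · next h =>
      exfalso
      have h2 : (Finsupp.single i 2) i = m i := by rw [h]
      rw [Finsupp.single_eq_same] at h2
      have := hm i
      omega
    · rfl
  | zero => intro m _; rw [MvPolynomial.coeff_zero]
  | add p q _ _ hp hq =>
    intro m hm
    rw [MvPolynomial.coeff_add, hp m hm, hq m hm, add_zero]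
  | smul r q _ hq =>
    intro m hm
    rw [smul_eq_mul, MvPolynomial.coeff_mul]
    apply Finset.sum_eq_zero
    rintro ⟨u, v⟩ huv
    rw [Finset.HasAntidiagonal.mem_antidiagonal] at huv
    have hv : ∀ i, v i ≤ 1 := by
      intro i
      have : u i + v i = m i := by rw [← Finsupp.add_apply, huv]
      have := hm i
      omega
    rw [hq v hv, mul_zero]

lemma prod_X_eq (T : Finset (Fin n)) :
    (∏ j ∈ T, MvPolynomial.X j : MvPolynomial (Fin n) ℚ)
      = MvPolynomial.monomial (∑ j ∈ T, Finsupp.single j 1) 1 := by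
  induction T using Finset.induction_on with
  | empty => simp
  | @insert a T haT ih =>
    rw [Finset.prod_insert haT, Finset.sum_insert haT, ih,
      show (MvPolynomial.X a : MvPolynomial (Fin n) ℚ)
        = MvPolynomial.monomial (Finsupp.single a 1) 1 by
          rw [← MvPolynomial.X_pow_eq_monomial, pow_one],
      MvPolynomial.monomial_mul, one_mul]

lemma ind_apply (T : Finset (Fin n)) (i : Fin n) :
    (∑ j ∈ T, Finsupp.single j (1:ℕ)) i = if i ∈ T then 1 else 0 := by
  classical
  rw [Finset.sum_apply']
  simp only [Finsupp.single_apply]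
  exact Finset.sum_ite_eq' T i (fun _ => 1)

lemma ind_inj {T T' : Finset (Fin n)}
    (h : (∑ j ∈ T, Finsupp.single j (1:ℕ)) = ∑ j ∈ T', Finsupp.single j (1:ℕ)) : T = T' := by
  ext i
  have h2 : ((∑ j ∈ T, Finsupp.single j (1:ℕ)) i) = ((∑ j ∈ T', Finsupp.single j (1:ℕ)) i) := by
    rw [h]
  rw [ind_apply, ind_apply] at h2
  by_cases hT : i ∈ T <;> by_cases hT' : i ∈ T' <;> simp [hT, hT'] at h2 ⊢

lemma ebar_indep : LinearIndependent ℚ (fun k : Fin (n+1) => ebar n ^ (k : ℕ)) := by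
  classical
  rw [Fintype.linearIndependent_iff]
  intro g hg k0
  -- rewrite the sum as the class of an explicit polynomial
  have hexp : ∀ k : ℕ, ebar n ^ k = Ideal.Quotient.mk (SqIdeal n)
      (k.factorial • ∑ T ∈ Finset.univ.powersetCard k, ∏ j ∈ T, MvPolynomial.X j) := by
    intro k
    rw [ebar, sq_expand Finset.univ (fun i => Ideal.Quotient.mk (SqIdeal n) (MvPolynomial.X i))
      (fun i _ => by
        rw [← map_mul, ← sq, Ideal.Quotient.eq_zero_iff_mem]
        exact Ideal.subset_span ⟨i, rfl⟩) k, map_nsmul, map_sum]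
    congr 1
    apply Finset.sum_congr rfl
    intro T _
    rw [map_prod]
  have hpoly : Ideal.Quotient.mk (SqIdeal n)
      (∑ k : Fin (n+1), g k • ((k : ℕ).factorial •
        ∑ T ∈ Finset.univ.powersetCard (k : ℕ), ∏ j ∈ T, MvPolynomial.X j)) = 0 := by
    rw [map_sum]
    rw [← hg]
    apply Finset.sum_congr rfl
    intro k _
    have hq : Ideal.Quotient.mk (SqIdeal n) (g k • ((k : ℕ).factorial •
          ∑ T ∈ Finset.univ.powersetCard (k : ℕ), ∏ j ∈ T, MvPolynomial.X j))
        = g k • Ideal.Quotient.mk (SqIdeal n) ((k : ℕ).factorial •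
          ∑ T ∈ Finset.univ.powersetCard (k : ℕ), ∏ j ∈ T, MvPolynomial.X j) := by
      exact map_smul (Ideal.Quotient.mkₐ ℚ (SqIdeal n)) (g k) ((k : ℕ).factorial •
          ∑ T ∈ Finset.univ.powersetCard (k : ℕ), ∏ j ∈ T, MvPolynomial.X j)
    rw [hq, hexp (k : ℕ)]
  rw [Ideal.Quotient.eq_zero_iff_mem] at hpoly
  -- pick a subset of size k0 and extract the coefficient
  obtain ⟨T0, hT0sub, hT0card⟩ := Finset.exists_subset_card_eq (s := (Finset.univ : Finset (Fin n)))
    (show (k0 : ℕ) ≤ (Finset.univ : Finset (Fin n)).card by rw [Finset.card_univ, Fintype.card_fin]; have := k0.isLt; omega)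
  have hcoeff := coeff_SqIdeal n hpoly (∑ j ∈ T0, Finsupp.single j 1)
    (fun i => by rw [ind_apply]; split <;> omega)
  rw [MvPolynomial.coeff_sum] at hcoeff
  have hterm : ∀ k : Fin (n+1), MvPolynomial.coeff (∑ j ∈ T0, Finsupp.single j 1)
      (g k • ((k : ℕ).factorial • ∑ T ∈ Finset.univ.powersetCard (k : ℕ),
        ∏ j ∈ T, MvPolynomial.X j))
      = if k = k0 then g k * ((k : ℕ).factorial : ℚ) else 0 := by
    intro k
    rw [MvPolynomial.coeff_smul, MvPolynomial.coeff_smul, MvPolynomial.coeff_sum]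
    have hTT : ∀ T ∈ Finset.univ.powersetCard (k : ℕ),
        MvPolynomial.coeff (∑ j ∈ T0, Finsupp.single j 1)
          (∏ j ∈ T, MvPolynomial.X j : MvPolynomial (Fin n) ℚ) = if T = T0 then 1 else 0 := by
      intro T _
      rw [prod_X_eq, MvPolynomial.coeff_monomial]
      by_cases hTT0 : T = T0
      · subst hTT0
        rw [if_pos rfl, if_pos rfl]
      · rw [if_neg hTT0, if_neg (fun h => hTT0 (ind_inj n h))]
    rw [Finset.sum_congr rfl hTT]
    by_cases hk : k = k0
    · subst hk
      rw [Finset.sum_ite_eq' (Finset.univ.powersetCard (k : ℕ)) T0 (fun _ => (1:ℚ)),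
        if_pos (Finset.mem_powersetCard.mpr ⟨hT0sub, hT0card⟩), if_pos rfl]
      simp [smul_eq_mul, nsmul_eq_mul]
    · rw [if_neg hk]
      have hzero : ∀ T ∈ Finset.univ.powersetCard (k : ℕ),
          (if T = T0 then (1:ℚ) else 0) = 0 := by
        intro T hT
        apply if_neg
        intro h
        apply hk
        apply Fin.ext
        rw [← (Finset.mem_powersetCard.mp hT).2, h, hT0card]
      rw [Finset.sum_congr rfl hzero, Finset.sum_const_zero, smul_zero, smul_zero]
  rw [Finset.sum_congr rfl (fun k _ => hterm k),
    Finset.sum_ite_eq' Finset.univ k0 (fun k => g k * ((k : ℕ).factorial : ℚ)),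
    if_pos (Finset.mem_univ k0)] at hcoeff
  exact (mul_eq_zero.mp hcoeff).resolve_right
    (by exact_mod_cast (Nat.factorial_pos (k0 : ℕ)).ne')

/-! ### Assembly -/

lemma zVG_eq : zVG n = zV n (Finset.univ.erase (Fin.last n)) (Fin.last n) := by
  rw [zVG, map_sum, zV_def]
  refine Finset.sum_bij' (fun (i : Fin n) _ => i.castSucc)
    (fun j hj => ⟨(j : ℕ), Fin.val_lt_last (Finset.mem_erase.mp hj).1⟩) ?_ ?_ ?_ ?_ ?_
  · intro i _
    exact Finset.mem_erase.mpr ⟨(Fin.castSucc_lt_last i).ne, Finset.mem_univ _⟩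
  · intro j _
    exact Finset.mem_univ _
  · intro i _
    apply Fin.ext
    rfl
  · intro j _
    apply Fin.ext
    rfl
  · intro i _
    rw [xbar_mk]

lemma mem_HF_last {σ : Equiv.Perm (Fin (n+1))} (hσ : σ (Fin.last n) = Fin.last n) :
    σ ∈ HF n (Finset.univ.erase (Fin.last n)) := by
  rw [mem_HF]
  intro x hx
  have hxl : x = Fin.last n := by
    by_contra hne
    exact hx (Finset.mem_erase.mpr ⟨hne, Finset.mem_univ x⟩)
  rw [hxl, hσ]

lemma z_mem_inv : zVG n ∈ VGinv n := by
  intro σ hσ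
  rw [zVG_eq, VGperm_zV, HF_image n (mem_HF_last n hσ), hσ, ← zVG_eq]

lemma inv_sub_span (x : VG n) (hx : x ∈ VGinv n) :
    x ∈ Submodule.span ℚ (Set.range fun k : Fin (n+1) => zVG n ^ (k : ℕ)) := by
  have hfix : Rey n (Finset.univ.erase (Fin.last n)) x = x :=
    Rey_fixed n (fun σ hσ => hx σ ((mem_HF n).mp hσ (Fin.last n) (Finset.notMem_erase _ _)))
  have hmem := main_ind n (Finset.univ.erase (Fin.last n)).card
    (Finset.univ.erase (Fin.last n)) (Fin.last n) le_rfl (Finset.notMem_erase _ _) x (by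
      rw [Finset.insert_erase (Finset.mem_univ (Fin.last n))]
      exact Bsub_univ n x)
  rw [hfix] at hmem
  have hzz : zV n (Finset.univ.erase (Fin.last n)) (Fin.last n) = zVG n := (zVG_eq n).symm
  have hcard : (Finset.univ.erase (Fin.last n)).card = n := by
    rw [Finset.card_erase_of_mem (Finset.mem_univ _), Finset.card_univ, Fintype.card_fin]
    omega
  have htop : zVG n ^ (n+1) = 0 := by
    rw [← hzz, zV_def, sq_expand (Finset.univ.erase (Fin.last n))
      (fun j => xbar n j (Fin.last n)) (fun j _ => xbar_sq n j _) (n+1),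
      Finset.powersetCard_eq_empty.mpr (by omega), Finset.sum_empty, smul_zero]
  refine Submodule.span_le.mpr ?_ hmem
  rintro w ⟨k, rfl⟩
  simp only
  by_cases hk : k ≤ n
  · apply Submodule.subset_span
    refine ⟨⟨k, by omega⟩, ?_⟩
    rw [hzz]
  · have h0 : zV n (Finset.univ.erase (Fin.last n)) (Fin.last n) ^ k = 0 := by
      rw [hzz, show k = (n+1) + (k - (n+1)) by omega, pow_add, htop, zero_mul]
    rw [h0]
    exact Submodule.zero_mem _

end VGaux

set_option synthInstance.maxHeartbeats 1000000

/-- For every integer `n ≥ 2`, the `ℚ`-vector space `VG_n^{S_n}` has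
dimension `n + 1`. -/
theorem finrank_VGinv (n : ℕ) (hn : 2 ≤ n) : Module.finrank ℚ (VGinv n) = n + 1 := by
  classical
  have hzmem : zVG n ∈ VGinv n := VGaux.z_mem_inv n
  let v : Fin (n+1) → (VGinv n) := fun k => ⟨zVG n ^ (k : ℕ), pow_mem hzmem (k : ℕ)⟩
  have hli : LinearIndependent ℚ v := by
    apply LinearIndependent.of_comp
      ((VGaux.phi n).toLinearMap.comp (Subalgebra.val (VGinv n)).toLinearMap)
    have hcomp : (((VGaux.phi n).toLinearMap.comp
          (Subalgebra.val (VGinv n)).toLinearMap) ∘ v)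
        = fun k : Fin (n+1) => VGaux.ebar n ^ (k : ℕ) := by
      funext k
      show VGaux.phi n (zVG n ^ (k : ℕ)) = VGaux.ebar n ^ (k : ℕ)
      rw [map_pow, VGaux.phi_zVG]
    rw [hcomp]
    exact VGaux.ebar_indep n
  have hsp : ⊤ ≤ Submodule.span ℚ (Set.range v) := by
    intro x _
    have hx := VGaux.inv_sub_span n x.1 x.2
    have himg : Set.range (fun k : Fin (n+1) => zVG n ^ (k : ℕ))
        = (Subalgebra.val (VGinv n)).toLinearMap '' Set.range v := by
      rw [← Set.range_comp]
      rfl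
    rw [himg, Submodule.span_image] at hx
    obtain ⟨y, hy, hxy⟩ := hx
    have hyx : y = x := Subtype.ext hxy
    exact hyx ▸ hy
  have hb : Module.Basis (Fin (n+1)) ℚ (VGinv n) := Module.Basis.mk hli hsp
  rw [Module.finrank_eq_card_basis hb, Fintype.card_fin]

end
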